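/- arXiv:2203.14458 — 2 statements merged into one kernel-verified Lean document; each statement's English description precedes it below -/
import Mathlib

section
/- Fix a prime power q. There exists a constant C > 0, depending only on q, such that for every real x ≥ 2, | Σ_{P : |P| ≤ x} (log |P|) / |P| − log x | ≤ C, where the sum runs over monic irreducible polynomials P ∈ F_q[T] with |P| ≤ x. -/
open Polynomial
open scoped Classical

noncomputable section

/-- The norm of a nonzero polynomial `f` over `F_q` is `q ^ deg f`; the norm of `0` is `0`. -/
def fqNorm {F : Type} [Field F] [Fintype F] (f : F[X]) : ℝ :=
  if f = 0 then 0 else (Fintype.card F : ℝ) ^ f.natDegree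

/-- The value at a polynomial `f` of a Dirichlet character mod `Q`, i.e. of a multiplicative
character of the quotient ring `F_q[T]/(Q)` (extended by zero off the units). -/
def charVal {F : Type} [Field F] [Fintype F] (Q : F[X])
    (χ : MulChar (F[X] ⧸ Ideal.span {Q}) ℂ) (f : F[X]) : ℂ :=
  χ (Ideal.Quotient.mk (Ideal.span {Q}) f)

/-- The central L-value `L(1/2, χ) = Σ_{monic f, |f| < |Q|} χ(f) |f|^{-1/2}`. -/
def centralL {F : Type} [Field F] [Fintype F] (Q : F[X])
    (χ : MulChar (F[X] ⧸ Ideal.span {Q}) ℂ) : ℂ :=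
  ∑ᶠ f ∈ {f : F[X] | f.Monic ∧ fqNorm f < fqNorm Q},
    charVal Q χ f / (Real.sqrt (fqNorm f) : ℂ)


namespace MertensAux

/-- If `q^d - 1 ∣ q^n - 1` with `q ≥ 2`, then `d ∣ n`. -/
lemma dvd_of_pow_sub_one_dvd {q : ℕ} (hq : 2 ≤ q) {d : ℕ} :
    ∀ n, (q ^ d - 1) ∣ (q ^ n - 1) → d ∣ n := by
  intro n
  induction n using Nat.strong_induction_on with
  | _ n ih =>
    intro h
    rcases Nat.eq_zero_or_pos d with rfl | hd
    · -- d = 0 : q^0 - 1 = 0 divides q^n - 1 means q^n = 1 means n = 0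
      simp only [pow_zero, Nat.sub_self, zero_dvd_iff, Nat.sub_eq_zero_iff_le] at h
      have : q ^ n ≤ 1 := h
      have hn : n = 0 := by
        by_contra hn0
        have : 2 ≤ q ^ n := le_trans hq (Nat.le_self_pow hn0 q)
        omega
      simp [hn]
    rcases lt_or_ge n d with hlt | hge
    · -- n < d : then q^n - 1 < q^d - 1, so q^n - 1 = 0, so n = 0
      rcases Nat.eq_zero_or_pos (q ^ n - 1) with h0 | hpos
      · have : q ^ n ≤ 1 := by omega
        have hn : n = 0 := by
          by_contra hn0
          have : 2 ≤ q ^ n := le_trans hq (Nat.le_self_pow hn0 q)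
          omega
        simp [hn]
      · exfalso
        have hle := Nat.le_of_dvd hpos h
        have : q ^ n < q ^ d := Nat.pow_lt_pow_right (by omega) hlt
        omega
    · -- n ≥ d : reduce to n - d
      have hdvd2 : (q ^ d - 1) ∣ (q ^ n - q ^ (n - d)) := by
        have heq : q ^ n - q ^ (n - d) = q ^ (n - d) * (q ^ d - 1) := by
          rw [Nat.mul_sub_one, ← pow_add, Nat.sub_add_cancel hge]
        rw [heq]
        exact dvd_mul_left _ _
      have h3 : (q ^ d - 1) ∣ (q ^ (n - d) - 1) := by
        have hsub := Nat.dvd_sub h hdvd2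
        have hle : q ^ (n - d) ≤ q ^ n := Nat.pow_le_pow_right (by omega) (by omega)
        have : q ^ n - 1 - (q ^ n - q ^ (n - d)) = q ^ (n - d) - 1 := by
          have h1 : 1 ≤ q ^ (n - d) := Nat.one_le_pow _ _ (by omega)
          omega
        rwa [this] at hsub
      have hih := ih (n - d) (by omega) h3
      have : n = (n - d) + d := (Nat.sub_add_cancel hge).symm
      rw [this]
      exact Nat.dvd_add hih dvd_rfl

/-- Geometric bound (naturals): `∑_{d=1}^m q^d ≤ 2 q^m` for `q ≥ 2`. -/
lemma sum_pow_le {q : ℕ} (hq : 2 ≤ q) (m : ℕ) :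
    ∑ d ∈ Finset.Icc 1 m, q ^ d ≤ 2 * q ^ m := by
  induction m with
  | zero => simp
  | succ m ih =>
    rw [Finset.sum_Icc_succ_top (by omega)]
    have h1 : q ^ (m + 1) = q * q ^ m := by ring
    have h2 : 2 * q ^ m ≤ q * q ^ m := Nat.mul_le_mul_right _ hq
    calc ∑ d ∈ Finset.Icc 1 m, q ^ d + q ^ (m + 1)
        ≤ 2 * q ^ m + q ^ (m+1) := by omega
      _ ≤ 2 * q ^ (m + 1) := by rw [h1]; omega

/-- Geometric bound (reals): `∑_{n=1}^N r^n ≤ 3(1 - r^N) ≤ 3` for `0 ≤ r ≤ 3/4`. -/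
lemma sum_pow_real_le {r : ℝ} (h0 : 0 ≤ r) (h1 : r ≤ 3/4) (N : ℕ) :
    ∑ n ∈ Finset.Icc 1 N, r ^ n ≤ 3 * (1 - r ^ N) := by
  induction N with
  | zero => simp
  | succ N ih =>
    rw [Finset.sum_Icc_succ_top (by omega)]
    have hp : (0:ℝ) ≤ r ^ N := pow_nonneg h0 _
    have : r ^ (N + 1) = r * r ^ N := by ring
    nlinarith [pow_nonneg h0 (N+1)]


variable (F : Type) [Field F] [Fintype F]

/-- The polynomial `X^{q^n} - X`. -/
def Mp (n : ℕ) : F[X] := X ^ (Fintype.card F ^ n) - X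

lemma card_two_le : 2 ≤ Fintype.card F := Fintype.one_lt_card

lemma Mp_ne_zero {n : ℕ} (hn : n ≠ 0) : Mp F n ≠ 0 :=
  FiniteField.X_pow_card_pow_sub_X_ne_zero F hn Fintype.one_lt_card

lemma Mp_natDegree {n : ℕ} (hn : n ≠ 0) : (Mp F n).natDegree = Fintype.card F ^ n :=
  FiniteField.X_pow_card_pow_sub_X_natDegree_eq F hn Fintype.one_lt_card

lemma Mp_monic {n : ℕ} (hn : n ≠ 0) : (Mp F n).Monic := by
  apply monic_X_pow_sub
  rw [degree_X]
  exact_mod_cast Nat.one_lt_pow hn Fintype.one_lt_card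

lemma Mp_separable {n : ℕ} (hn : n ≠ 0) : (Mp F n).Separable := by
  rw [separable_def, Mp, derivative_sub, derivative_X_pow, derivative_X]
  have hcast : ((Fintype.card F ^ n : ℕ) : F) = 0 := by
    rw [Nat.cast_pow, FiniteField.cast_card_eq_zero, zero_pow hn]
  rw [hcast, map_zero, zero_mul, zero_sub]
  exact isCoprime_one_right.neg_right

lemma Mp_squarefree {n : ℕ} (hn : n ≠ 0) : Squarefree (Mp F n) :=
  (Mp_separable F hn).squarefree


lemma dvd_Mp_iff {P : F[X]} (hirr : Irreducible P) {n : ℕ} (hn : n ≠ 0) :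
    P ∣ Mp F n ↔ P.natDegree ∣ n := by
  haveI := Fact.mk hirr
  have hP0 : P ≠ 0 := hirr.ne_zero
  haveI : Module.Finite F (AdjoinRoot P) := (AdjoinRoot.powerBasis hP0).finite
  haveI : Finite (AdjoinRoot P) := Module.finite_of_finite F
  haveI : Fintype (AdjoinRoot P) := Fintype.ofFinite _
  have hcard : Fintype.card (AdjoinRoot P) = Fintype.card F ^ P.natDegree := by
    rw [Module.card_eq_pow_finrank (K := F) (V := AdjoinRoot P)]
    congr 1
    rw [(AdjoinRoot.powerBasis hP0).finrank, AdjoinRoot.powerBasis_dim]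
  constructor
  · intro hdvd
    have h0 : AdjoinRoot.mk P (Mp F n) = 0 := AdjoinRoot.mk_eq_zero.mpr hdvd
    have hroot : (AdjoinRoot.root P) ^ (Fintype.card F ^ n) = AdjoinRoot.root P := by
      rw [Mp, map_sub, map_pow, AdjoinRoot.mk_X, sub_eq_zero] at h0
      exact h0
    obtain ⟨p, hpc⟩ := CharP.exists F
    haveI := hpc
    obtain ⟨k, hp, hk⟩ := FiniteField.card F p
    haveI : Fact p.Prime := ⟨hp⟩
    haveI : CharP (AdjoinRoot P) p :=
      charP_of_injective_algebraMap (algebraMap F (AdjoinRoot P)).injective p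
    haveI : ExpChar (AdjoinRoot P) p := .prime hp
    set φ := iterateFrobenius (AdjoinRoot P) p ((k : ℕ) * n) with hφ
    have hφx : ∀ x : AdjoinRoot P, φ x = x ^ (Fintype.card F ^ n) := by
      intro x
      rw [hφ, iterateFrobenius_def, pow_mul, ← hk]
    have hcomm : ∀ c : F, φ (algebraMap F (AdjoinRoot P) c) = algebraMap F (AdjoinRoot P) c := by
      intro c
      rw [hφx, ← map_pow, FiniteField.pow_card_pow]
    let ψ : AdjoinRoot P →ₐ[F] AdjoinRoot P := { φ with commutes' := hcomm }
    have hall : ∀ x : AdjoinRoot P, ψ x = x := by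
      have htop : (⊤ : Subalgebra F (AdjoinRoot P)) ≤ AlgHom.equalizer ψ (AlgHom.id F _) := by
        rw [← AdjoinRoot.adjoinRoot_eq_top (f := P)]
        apply Algebra.adjoin_le
        intro x hx
        rw [Set.mem_singleton_iff] at hx
        subst hx
        have : ψ (AdjoinRoot.root P) = AdjoinRoot.root P := by
          show φ (AdjoinRoot.root P) = AdjoinRoot.root P
          rw [hφx]; exact hroot
        exact this
      intro x
      exact htop (Algebra.mem_top (A := AdjoinRoot P) (x := x))
    obtain ⟨g, hg⟩ := IsCyclic.exists_generator (α := (AdjoinRoot P)ˣ)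
    have horder : orderOf g = Fintype.card F ^ P.natDegree - 1 := by
      rw [orderOf_eq_card_of_forall_mem_zpowers hg, Fintype.card_eq_nat_card,
        Nat.card_units, Nat.card_eq_fintype_card, hcard, Nat.card_eq_fintype_card]
    have hfix : (g : AdjoinRoot P) ^ (Fintype.card F ^ n) = (g : AdjoinRoot P) := by
      rw [← hφx]; exact hall _
    have hgpow : g ^ (Fintype.card F ^ n) = g := by
      ext
      rw [Units.val_pow_eq_pow_val]
      exact hfix
    have hq1 : 1 ≤ Fintype.card F ^ n := Nat.one_le_pow _ _ Fintype.card_pos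
    have h1 : g ^ (Fintype.card F ^ n - 1) = 1 := by
      have h2 : g ^ (Fintype.card F ^ n - 1) * g = 1 * g := by
        rw [← pow_succ, Nat.sub_add_cancel hq1, hgpow, one_mul]
      exact mul_right_cancel h2
    have hdvd1 : orderOf g ∣ Fintype.card F ^ n - 1 := orderOf_dvd_of_pow_eq_one h1
    rw [horder] at hdvd1
    exact dvd_of_pow_sub_one_dvd (card_two_le F) n hdvd1
  · rintro ⟨m, hm2⟩
    have hroot : (AdjoinRoot.root P) ^ (Fintype.card F ^ n) = AdjoinRoot.root P := by
      rw [hm2, pow_mul, ← hcard]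
      exact FiniteField.pow_card_pow m _
    rw [← AdjoinRoot.mk_eq_zero, Mp, map_sub, map_pow, AdjoinRoot.mk_X, hroot, sub_self]


open UniqueFactorizationMonoid in
/-- Membership in the normalized factors of a nonzero polynomial, for monic irreducibles. -/
lemma mem_normalizedFactors_iff_poly {M P : F[X]} (hM : M ≠ 0) :
    P ∈ normalizedFactors M ↔ P.Monic ∧ Irreducible P ∧ P ∣ M := by
  constructor
  · intro h
    have h1 : Irreducible P := irreducible_of_normalized_factor P h
    have h2 : P ∣ M := dvd_of_mem_normalizedFactors h
    have h3 : P.Monic := by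
      have := normalize_normalized_factor P h
      have hne : P ≠ 0 := h1.ne_zero
      have := Polynomial.monic_normalize (p := P) hne
      rwa [normalize_normalized_factor P h] at this
    exact ⟨h3, h1, h2⟩
  · rintro ⟨hm, hirr, hdvd⟩
    obtain ⟨Q, hQmem, hQassoc⟩ := exists_mem_normalizedFactors_of_dvd hM hirr hdvd
    have : P = Q := by
      exact hQassoc.eq_of_normalized hm.normalize_eq_self
        (normalize_normalized_factor Q hQmem)
    rwa [this]

/-- The finite set of monic irreducible polynomials of degree `d` over `F`. -/
def Pfin (d : ℕ) : Finset F[X] :=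
  (UniqueFactorizationMonoid.normalizedFactors (Mp F d)).toFinset.filter
    (fun P => P.natDegree = d)

lemma mem_Pfin {d : ℕ} (hd : d ≠ 0) {P : F[X]} :
    P ∈ Pfin F d ↔ P.Monic ∧ Irreducible P ∧ P.natDegree = d := by
  rw [Pfin, Finset.mem_filter, Multiset.mem_toFinset,
    mem_normalizedFactors_iff_poly F (Mp_ne_zero F hd)]
  constructor
  · rintro ⟨⟨h1, h2, h3⟩, h4⟩
    exact ⟨h1, h2, h4⟩
  · rintro ⟨h1, h2, h3⟩
    refine ⟨⟨h1, h2, ?_⟩, h3⟩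
    rw [dvd_Mp_iff F h2 hd, h3]


open UniqueFactorizationMonoid in
lemma gauss_identity {n : ℕ} (hn : n ≠ 0) :
    ∑ d ∈ n.divisors, d * (Pfin F d).card = Fintype.card F ^ n := by
  classical
  have hM : Mp F n ≠ 0 := Mp_ne_zero F hn
  have hnodup : (normalizedFactors (Mp F n)).Nodup :=
    (squarefree_iff_nodup_normalizedFactors hM).mp (Mp_squarefree F hn)
  have hmonics : ∀ f ∈ normalizedFactors (Mp F n), f.Monic := fun f hf =>
    ((mem_normalizedFactors_iff_poly F hM).mp hf).1
  have hprodmonic : (normalizedFactors (Mp F n)).prod.Monic := by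
    have := monic_multiset_prod_of_monic (normalizedFactors (Mp F n)) id
      (fun f hf => hmonics f hf)
    rwa [Multiset.map_id] at this
  have hprod : (normalizedFactors (Mp F n)).prod = Mp F n :=
    eq_of_monic_of_associated hprodmonic (Mp_monic F hn) (prod_normalizedFactors hM)
  have hdeg : Fintype.card F ^ n
      = ((normalizedFactors (Mp F n)).map Polynomial.natDegree).sum := by
    conv_lhs => rw [← Mp_natDegree F hn, ← hprod]
    exact natDegree_multiset_prod_of_monic _ hmonics
  have hdeg2 : ((normalizedFactors (Mp F n)).map Polynomial.natDegree).sum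
      = ∑ P ∈ (normalizedFactors (Mp F n)).toFinset, P.natDegree := by
    rw [Finset.sum]
    congr 1
    rw [Multiset.toFinset_val, Multiset.dedup_eq_self.mpr hnodup]
  have hset : (normalizedFactors (Mp F n)).toFinset
      = n.divisors.biUnion (fun d => Pfin F d) := by
    ext P
    simp only [Finset.mem_biUnion, Multiset.mem_toFinset,
      mem_normalizedFactors_iff_poly F hM]
    constructor
    · rintro ⟨h1, h2, h3⟩
      have hd : P.natDegree ∣ n := (dvd_Mp_iff F h2 hn).mp h3
      refine ⟨P.natDegree, Nat.mem_divisors.mpr ⟨hd, hn⟩, ?_⟩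
      rw [mem_Pfin F h2.natDegree_pos.ne']
      exact ⟨h1, h2, rfl⟩
    · rintro ⟨d, hdmem, hP⟩
      obtain ⟨hdvd, _⟩ := Nat.mem_divisors.mp hdmem
      have hd0 : d ≠ 0 := (Nat.pos_of_mem_divisors hdmem).ne'
      obtain ⟨h1, h2, h3⟩ := (mem_Pfin F hd0).mp hP
      exact ⟨h1, h2, (dvd_Mp_iff F h2 hn).mpr (h3 ▸ hdvd)⟩
  have hdisj : ∀ d1 ∈ (n.divisors : Set ℕ), ∀ d2 ∈ (n.divisors : Set ℕ), d1 ≠ d2 →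
      Disjoint (Pfin F d1) (Pfin F d2) := by
    intro d1 h1 d2 h2 hne
    rw [Finset.disjoint_left]
    intro P hP1 hP2
    have hd1 : d1 ≠ 0 := (Nat.pos_of_mem_divisors (by exact_mod_cast h1)).ne'
    have hd2 : d2 ≠ 0 := (Nat.pos_of_mem_divisors (by exact_mod_cast h2)).ne'
    exact hne (((mem_Pfin F hd1).mp hP1).2.2 ▸ ((mem_Pfin F hd2).mp hP2).2.2)
  have hsum : ∑ P ∈ n.divisors.biUnion (fun d => Pfin F d), P.natDegree
      = ∑ d ∈ n.divisors, ∑ P ∈ Pfin F d, P.natDegree := Finset.sum_biUnion hdisj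
  have hinner : ∀ d ∈ n.divisors, ∑ P ∈ Pfin F d, P.natDegree = d * (Pfin F d).card := by
    intro d hd
    have hd0 : d ≠ 0 := (Nat.pos_of_mem_divisors hd).ne'
    rw [Finset.sum_congr rfl (fun P hP => ((mem_Pfin F hd0).mp hP).2.2),
      Finset.sum_const, smul_eq_mul, mul_comm]
  rw [Finset.sum_congr rfl hinner |>.symm, ← hsum, ← hset, ← hdeg2, ← hdeg]


lemma term_le {d : ℕ} (hd : d ≠ 0) : d * (Pfin F d).card ≤ Fintype.card F ^ d := by
  have hg := gauss_identity F hd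
  rw [← hg]
  exact Finset.single_le_sum (f := fun d' => d' * (Pfin F d').card)
    (fun i _ => Nat.zero_le _) (Nat.mem_divisors_self d hd)

lemma term_ge {n : ℕ} (hn : n ≠ 0) :
    Fintype.card F ^ n ≤ n * (Pfin F n).card + 2 * Fintype.card F ^ (n / 2) := by
  have hg := gauss_identity F hn
  have hmem : n ∈ n.divisors := Nat.mem_divisors_self n hn
  have hsplit : (∑ d ∈ n.divisors.erase n, d * (Pfin F d).card) + n * (Pfin F n).card
      = ∑ d ∈ n.divisors, d * (Pfin F d).card :=
    Finset.sum_erase_add n.divisors (fun d => d * (Pfin F d).card) hmem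
  have hbound : ∑ d ∈ n.divisors.erase n, d * (Pfin F d).card
      ≤ ∑ d ∈ Finset.Icc 1 (n / 2), Fintype.card F ^ d := by
    calc ∑ d ∈ n.divisors.erase n, d * (Pfin F d).card
        ≤ ∑ d ∈ n.divisors.erase n, Fintype.card F ^ d :=
          Finset.sum_le_sum (fun d hd =>
            term_le F (Nat.pos_of_mem_divisors (Finset.mem_of_mem_erase hd)).ne')
      _ ≤ ∑ d ∈ Finset.Icc 1 (n / 2), Fintype.card F ^ d := by
          apply Finset.sum_le_sum_of_subset
          intro d hd
          have hne := Finset.ne_of_mem_erase hd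
          have hdn := Finset.mem_of_mem_erase hd
          obtain ⟨hdvd, _⟩ := Nat.mem_divisors.mp hdn
          have hd1 : 1 ≤ d := Nat.pos_of_mem_divisors hdn
          obtain ⟨c, hc⟩ := hdvd
          have hc0 : c ≠ 0 := by rintro rfl; rw [Nat.mul_zero] at hc; exact hn hc
          have hc1 : c ≠ 1 := by rintro rfl; rw [Nat.mul_one] at hc; exact hne hc.symm
          have h2d : d * 2 ≤ n := by
            have h := Nat.mul_le_mul_left d (show 2 ≤ c by omega)
            rw [← hc] at h
            exact h
          exact Finset.mem_Icc.mpr ⟨hd1, by omega⟩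
  have hgeo := sum_pow_le (card_two_le F) (n / 2)
  omega


lemma real_upper {n : ℕ} (hn : n ≠ 0) :
    (n : ℝ) * ((Pfin F n).card : ℝ) / (Fintype.card F : ℝ) ^ n ≤ 1 := by
  have hq0 : (0:ℝ) < (Fintype.card F : ℝ) := by
    exact_mod_cast Fintype.card_pos
  have hqn : (0:ℝ) < (Fintype.card F : ℝ) ^ n := by positivity
  rw [div_le_one hqn]
  exact_mod_cast term_le F hn

lemma sqrt_card_inv_le : (Real.sqrt (Fintype.card F))⁻¹ ≤ 3/4 := by
  have hq2 : (2:ℝ) ≤ (Fintype.card F : ℝ) := by exact_mod_cast card_two_le F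
  have hs : (4:ℝ)/3 ≤ Real.sqrt (Fintype.card F) := by
    nlinarith [Real.sq_sqrt (by linarith : (0:ℝ) ≤ (Fintype.card F : ℝ)),
      Real.sqrt_nonneg ((Fintype.card F : ℝ))]
  calc (Real.sqrt (Fintype.card F))⁻¹ ≤ ((4:ℝ)/3)⁻¹ := inv_anti₀ (by norm_num) hs
    _ ≤ 3/4 := by norm_num

lemma real_lower {n : ℕ} (hn : n ≠ 0) :
    1 - 2 * ((Real.sqrt (Fintype.card F))⁻¹) ^ n
      ≤ (n : ℝ) * ((Pfin F n).card : ℝ) / (Fintype.card F : ℝ) ^ n := by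
  have hq2 : (2:ℝ) ≤ (Fintype.card F : ℝ) := by exact_mod_cast card_two_le F
  have hq0 : (0:ℝ) < (Fintype.card F : ℝ) := by linarith
  have hqn : (0:ℝ) < (Fintype.card F : ℝ) ^ n := by positivity
  have hs0 : 0 < Real.sqrt (Fintype.card F) := Real.sqrt_pos.mpr hq0
  have hs1 : 1 ≤ Real.sqrt (Fintype.card F) := by
    rw [show (1:ℝ) = Real.sqrt 1 by simp]
    exact Real.sqrt_le_sqrt (by linarith)
  have hsq : Real.sqrt (Fintype.card F) ^ 2 = (Fintype.card F : ℝ) := Real.sq_sqrt hq0.le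
  have hsn : (0:ℝ) < Real.sqrt (Fintype.card F) ^ n := pow_pos hs0 n
  have hhalf : (Fintype.card F : ℝ) ^ (n / 2) ≤ Real.sqrt (Fintype.card F) ^ n := by
    calc (Fintype.card F : ℝ) ^ (n/2) = (Real.sqrt (Fintype.card F) ^ 2) ^ (n/2) := by rw [hsq]
      _ = Real.sqrt (Fintype.card F) ^ (2 * (n/2)) := by rw [← pow_mul]
      _ ≤ Real.sqrt (Fintype.card F) ^ n := pow_le_pow_right₀ hs1 (by omega)
  have hqn_eq : (Fintype.card F : ℝ) ^ n
      = Real.sqrt (Fintype.card F) ^ n * Real.sqrt (Fintype.card F) ^ n := by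
    rw [← pow_add, ← two_mul, pow_mul, hsq]
  have hR : (Fintype.card F : ℝ) ^ n
      ≤ (n:ℝ) * ((Pfin F n).card : ℝ) + 2 * (Fintype.card F : ℝ) ^ (n / 2) := by
    exact_mod_cast term_ge F hn
  have key : (Fintype.card F : ℝ) ^ (n/2) / (Fintype.card F : ℝ) ^ n
      ≤ ((Real.sqrt (Fintype.card F))⁻¹) ^ n := by
    rw [inv_pow, div_le_iff₀ hqn, hqn_eq, ← mul_assoc, inv_mul_cancel₀ hsn.ne', one_mul]
    exact hhalf
  have h1 : (1:ℝ) ≤ ((n:ℝ) * ((Pfin F n).card : ℝ) + 2 * (Fintype.card F : ℝ) ^ (n / 2))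
      / (Fintype.card F : ℝ) ^ n := by
    rw [le_div_iff₀ hqn]; linarith
  have h2 : ((n:ℝ) * ((Pfin F n).card : ℝ) + 2 * (Fintype.card F : ℝ) ^ (n / 2))
      / (Fintype.card F : ℝ) ^ n
      = (n:ℝ) * ((Pfin F n).card : ℝ) / (Fintype.card F : ℝ) ^ n
        + 2 * ((Fintype.card F : ℝ) ^ (n/2) / (Fintype.card F : ℝ) ^ n) := by ring
  rw [h2] at h1
  linarith

end MertensAux


/-- Mertens-type estimate over `F_q[T]`: `Σ_{|P| ≤ x} log|P|/|P| = log x + O(1)`,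
the sum running over monic irreducible polynomials. -/
theorem mertens_first (F : Type) [Field F] [Fintype F] :
    ∃ C : ℝ, 0 < C ∧
      ∀ x : ℝ, 2 ≤ x →
        |(∑ᶠ P ∈ {P : F[X] | P.Monic ∧ Irreducible P ∧ fqNorm P ≤ x},
            Real.log (fqNorm P) / fqNorm P) - Real.log x| ≤ C := by
  classical
  have hq1 : 1 < Fintype.card F := Fintype.one_lt_card
  have hq1R : (1:ℝ) < (Fintype.card F : ℝ) := by exact_mod_cast hq1
  have hlq : 0 < Real.log (Fintype.card F) := Real.log_pos hq1R
  refine ⟨8 * Real.log (Fintype.card F), by positivity, ?_⟩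
  intro x hx
  set N := Nat.log (Fintype.card F) ⌊x⌋₊ with hN
  have hx0 : (0:ℝ) ≤ x := by linarith
  have hfl1 : 1 ≤ ⌊x⌋₊ := Nat.le_floor (by push_cast; linarith)
  have hfl0 : ⌊x⌋₊ ≠ 0 := by omega
  have hset : {P : F[X] | P.Monic ∧ Irreducible P ∧ fqNorm P ≤ x}
      = ↑((Finset.Icc 1 N).biUnion (MertensAux.Pfin F)) := by
    ext P
    simp only [Set.mem_setOf_eq, Finset.coe_biUnion, Set.mem_iUnion, Finset.mem_coe,
      Finset.mem_Icc, exists_prop]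
    constructor
    · rintro ⟨h1, h2, h3⟩
      have hd1 : 0 < P.natDegree := h2.natDegree_pos
      have hnorm : fqNorm P = (Fintype.card F : ℝ) ^ P.natDegree := by
        rw [fqNorm, if_neg h2.ne_zero]
      have hle : P.natDegree ≤ N := by
        rw [hnorm] at h3
        have hfloor : Fintype.card F ^ P.natDegree ≤ ⌊x⌋₊ :=
          Nat.le_floor (by push_cast; exact h3)
        exact (Nat.le_log_iff_pow_le hq1 hfl0).mpr hfloor
      exact ⟨P.natDegree, ⟨hd1, hle⟩,
        (MertensAux.mem_Pfin F hd1.ne').mpr ⟨h1, h2, rfl⟩⟩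
    · rintro ⟨n, ⟨hn1, hnN⟩, hP⟩
      obtain ⟨h1, h2, h3⟩ := (MertensAux.mem_Pfin F (by omega)).mp hP
      refine ⟨h1, h2, ?_⟩
      rw [fqNorm, if_neg h2.ne_zero, h3]
      have hpow : Fintype.card F ^ n ≤ ⌊x⌋₊ := (Nat.le_log_iff_pow_le hq1 hfl0).mp hnN
      calc ((Fintype.card F : ℝ)) ^ n = ((Fintype.card F ^ n : ℕ) : ℝ) := by push_cast; ring
        _ ≤ (⌊x⌋₊ : ℝ) := by exact_mod_cast hpow
        _ ≤ x := Nat.floor_le hx0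
  rw [hset, finsum_mem_coe_finset]
  have hdisj : ∀ d1 ∈ ((Finset.Icc 1 N : Finset ℕ) : Set ℕ),
      ∀ d2 ∈ ((Finset.Icc 1 N : Finset ℕ) : Set ℕ), d1 ≠ d2 →
      Disjoint (MertensAux.Pfin F d1) (MertensAux.Pfin F d2) := by
    intro d1 h1 d2 h2 hne
    simp only [Finset.mem_coe, Finset.mem_Icc] at h1 h2
    rw [Finset.disjoint_left]
    intro P hP1 hP2
    exact hne (((MertensAux.mem_Pfin F (by omega)).mp hP1).2.2 ▸
      ((MertensAux.mem_Pfin F (by omega)).mp hP2).2.2)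
  rw [Finset.sum_biUnion hdisj]
  have hinner : ∀ n ∈ Finset.Icc 1 N,
      ∑ P ∈ MertensAux.Pfin F n, Real.log (fqNorm P) / fqNorm P
      = Real.log (Fintype.card F)
        * ((n : ℝ) * ((MertensAux.Pfin F n).card : ℝ) / (Fintype.card F : ℝ) ^ n) := by
    intro n hn
    rw [Finset.mem_Icc] at hn
    have hterm : ∀ P ∈ MertensAux.Pfin F n, Real.log (fqNorm P) / fqNorm P
        = (n : ℝ) * Real.log (Fintype.card F) / (Fintype.card F : ℝ) ^ n := by
      intro P hP
      obtain ⟨h1, h2, h3⟩ := (MertensAux.mem_Pfin F (by omega)).mp hP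
      rw [fqNorm, if_neg h2.ne_zero, h3, Real.log_pow]
    rw [Finset.sum_congr rfl hterm, Finset.sum_const, nsmul_eq_mul]
    ring
  rw [Finset.sum_congr rfl hinner, ← Finset.mul_sum]
  set T := ∑ n ∈ Finset.Icc 1 N,
    ((n : ℝ) * ((MertensAux.Pfin F n).card : ℝ) / (Fintype.card F : ℝ) ^ n) with hT
  have hub : T ≤ (N : ℝ) := by
    calc T ≤ ∑ n ∈ Finset.Icc 1 N, (1:ℝ) :=
          Finset.sum_le_sum (fun n hn =>
            MertensAux.real_upper F (by rw [Finset.mem_Icc] at hn; omega))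
      _ = (N : ℝ) := by simp
  have hr0 : (0:ℝ) ≤ (Real.sqrt (Fintype.card F))⁻¹ := by positivity
  have hlb : (N : ℝ) - 6 ≤ T := by
    have h1 : ∑ n ∈ Finset.Icc 1 N, (1 - 2 * ((Real.sqrt (Fintype.card F))⁻¹) ^ n) ≤ T :=
      Finset.sum_le_sum (fun n hn =>
        MertensAux.real_lower F (by rw [Finset.mem_Icc] at hn; omega))
    have h2 : ∑ n ∈ Finset.Icc 1 N, (1 - 2 * ((Real.sqrt (Fintype.card F))⁻¹) ^ n)
        = (N : ℝ) - 2 * ∑ n ∈ Finset.Icc 1 N, ((Real.sqrt (Fintype.card F))⁻¹) ^ n := by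
      rw [Finset.sum_sub_distrib, ← Finset.mul_sum]
      simp
    have h3 := MertensAux.sum_pow_real_le hr0 (MertensAux.sqrt_card_inv_le F) N
    have h4 : (0:ℝ) ≤ ((Real.sqrt (Fintype.card F))⁻¹) ^ N := by positivity
    rw [h2] at h1
    linarith
  have hqNx : ((Fintype.card F : ℝ)) ^ N ≤ x := by
    have h := Nat.pow_log_le_self (Fintype.card F) hfl0
    calc ((Fintype.card F : ℝ)) ^ N = ((Fintype.card F ^ N : ℕ) : ℝ) := by push_cast; ring
      _ ≤ (⌊x⌋₊ : ℝ) := by exact_mod_cast h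
      _ ≤ x := Nat.floor_le hx0
  have hNlog : (N : ℝ) * Real.log (Fintype.card F) ≤ Real.log x := by
    have h := (Real.log_le_log_iff (by positivity) (by linarith)).mpr hqNx
    rwa [Real.log_pow] at h
  have hxlog : Real.log x ≤ ((N : ℝ) + 1) * Real.log (Fintype.card F) := by
    have hlt : x < ((Fintype.card F : ℝ)) ^ (N + 1) := by
      have h := Nat.lt_pow_succ_log_self hq1 ⌊x⌋₊
      have h2 : (⌊x⌋₊ : ℝ) + 1 ≤ ((Fintype.card F ^ (N+1) : ℕ) : ℝ) := by exact_mod_cast h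
      have h3 : x < (⌊x⌋₊ : ℝ) + 1 := Nat.lt_floor_add_one x
      calc x < (⌊x⌋₊ : ℝ) + 1 := h3
        _ ≤ ((Fintype.card F ^ (N+1) : ℕ) : ℝ) := h2
        _ = ((Fintype.card F : ℝ)) ^ (N+1) := by push_cast; ring
    have h := (Real.log_le_log_iff (by linarith) (by positivity)).mpr hlt.le
    rw [Real.log_pow] at h
    push_cast at h ⊢
    linarith
  have e1 : Real.log (Fintype.card F) * ((N : ℝ) - 6) ≤ Real.log (Fintype.card F) * T :=
    mul_le_mul_of_nonneg_left hlb hlq.le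
  have e2 : Real.log (Fintype.card F) * T ≤ Real.log (Fintype.card F) * (N : ℝ) :=
    mul_le_mul_of_nonneg_left hub hlq.le
  rw [abs_le]
  constructor <;> nlinarith [hNlog, hxlog, e1, e2, hlq]
end
end

section
/- Fix a prime power q. There exist a constant b (depending only on q) and a constant C > 0 (depending only on q) such that for every real x ≥ 2, | Σ_{P : |P| ≤ x} 1/|P| − log log x − b | ≤ C / log x, where the sum runs over monic irreducible polynomials P ∈ F_q[T] with |P| ≤ x. -/
open Polynomial
open scoped Classical

noncomputable section

namespace MertensFF

variable {F : Type} [Field F] [Fintype F]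

/-- Finset of all polynomials of natDegree ≤ n. -/
def polysUpTo (F : Type) [Field F] [Fintype F] (n : ℕ) : Finset F[X] :=
  (Finset.univ : Finset (Fin (n+1) → F)).image
    (fun c => ∑ i : Fin (n+1), Polynomial.C (c i) * Polynomial.X ^ (i : ℕ))

lemma mem_polysUpTo {n : ℕ} {f : F[X]} (h : f.natDegree ≤ n) : f ∈ polysUpTo F n := by
  classical
  refine Finset.mem_image.mpr ⟨fun i => f.coeff i, Finset.mem_univ _, ?_⟩
  rw [Fin.sum_univ_eq_sum_range (fun i => Polynomial.C (f.coeff i) * Polynomial.X ^ i)]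
  conv_rhs => rw [f.as_sum_range' (n+1) (Nat.lt_succ_of_le h)]
  exact Finset.sum_congr rfl fun i _ => by rw [Polynomial.C_mul_X_pow_eq_monomial]

/-- Finset of monic irreducible polynomials of degree exactly n. -/
def irrF (F : Type) [Field F] [Fintype F] (n : ℕ) : Finset F[X] :=
  (polysUpTo F n).filter (fun P => P.Monic ∧ Irreducible P ∧ P.natDegree = n)

lemma mem_irrF {n : ℕ} {P : F[X]} :
    P ∈ irrF F n ↔ P.Monic ∧ Irreducible P ∧ P.natDegree = n := by
  constructor
  · intro h; exact (Finset.mem_filter.mp h).2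
  · intro h; exact Finset.mem_filter.mpr ⟨mem_polysUpTo h.2.2.le, h⟩


section AlgebraCore

lemma irr_dvd_galoisPoly {P : F[X]} (hm : P.Monic) (hirr : Irreducible P) :
    P ∣ (X ^ Fintype.card F ^ P.natDegree - X : F[X]) := by
  haveI : Fact (Irreducible P) := ⟨hirr⟩
  letI : Module.Finite F (AdjoinRoot P) :=
    Module.Finite.of_basis (AdjoinRoot.powerBasis' hm).basis
  letI : Finite (AdjoinRoot P) := Module.finite_of_finite F
  letI : Fintype (AdjoinRoot P) := Fintype.ofFinite _
  have hcard : Fintype.card (AdjoinRoot P) = Fintype.card F ^ P.natDegree := by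
    rw [Module.card_eq_pow_finrank (K := F) (V := AdjoinRoot P)]
    congr 1
    have := Module.finrank_eq_card_basis (AdjoinRoot.powerBasis' hm).basis
    exact (AdjoinRoot.powerBasis' hm).finrank
  have hroot : (AdjoinRoot.root P) ^ Fintype.card F ^ P.natDegree = AdjoinRoot.root P := by
    rw [← hcard]; exact FiniteField.pow_card _
  have hmin : minpoly F (AdjoinRoot.root P) = P := by
    rw [AdjoinRoot.minpoly_root hirr.ne_zero, hm.leadingCoeff, inv_one, map_one, mul_one]
  have hdvd := minpoly.dvd F (AdjoinRoot.root P)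
    (p := X ^ Fintype.card F ^ P.natDegree - X)
    (by rw [map_sub, map_pow, aeval_X, hroot, sub_self])
  rwa [hmin] at hdvd

lemma natDvd_of_pow_sub_one_dvd {q d n : ℕ} (hq : 2 ≤ q) (hd : d ≠ 0)
    (h : q ^ d - 1 ∣ q ^ n - 1) : d ∣ n := by
  have hq1 : 1 ≤ q := by omega
  have hqd : 1 ≤ q ^ d := Nat.one_le_pow _ _ (by omega)
  -- q ^ d ≡ 1 [MOD q^d - 1]
  have h1 : 1 ≡ q ^ d [MOD q ^ d - 1] := (Nat.modEq_iff_dvd' hqd).mpr dvd_rfl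
  have hn : 1 ≡ q ^ n [MOD q ^ d - 1] :=
    (Nat.modEq_iff_dvd' (Nat.one_le_pow _ _ (by omega))).mpr h
  have hr : q ^ (n % d) ≡ 1 [MOD q ^ d - 1] := by
    calc q ^ (n % d) = 1 ^ (n / d) * q ^ (n % d) := by rw [one_pow, one_mul]
    _ ≡ (q ^ d) ^ (n / d) * q ^ (n % d) [MOD q ^ d - 1] :=
        (Nat.ModEq.pow _ h1).mul_right _
    _ = q ^ n := by rw [← pow_mul, ← pow_add, Nat.div_add_mod]
    _ ≡ 1 [MOD q ^ d - 1] := hn.symm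
  have hdvd : q ^ d - 1 ∣ q ^ (n % d) - 1 :=
    (Nat.modEq_iff_dvd' (Nat.one_le_pow _ _ (by omega))).mp hr.symm
  have hd0 : 0 < d := Nat.pos_of_ne_zero hd
  have hmod : n % d < d := Nat.mod_lt _ hd0
  have h2 : q ^ (n % d) < q ^ d := Nat.pow_lt_pow_right (a := q) (by omega) hmod
  have h3 : 1 ≤ q ^ (n % d) := Nat.one_le_pow _ _ (by omega)
  have hlt : q ^ (n % d) - 1 < q ^ d - 1 := Nat.sub_lt_sub_right h3 h2
  have h0 : q ^ (n % d) - 1 = 0 := Nat.eq_zero_of_dvd_of_lt hdvd hlt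
  have h4 : q ^ (n % d) = 1 := le_antisymm (Nat.sub_eq_zero_iff_le.mp h0) h3
  have hr0 : n % d = 0 := by
    by_contra hne
    have h5 : q ≤ q ^ (n % d) := Nat.le_self_pow hne q
    rw [h4] at h5
    exact absurd h5 (by omega)
  exact Nat.dvd_of_mod_eq_zero hr0

lemma natDegree_dvd_of_dvd_galoisPoly {P : F[X]} (hm : P.Monic) (hirr : Irreducible P)
    {n : ℕ} (hn : n ≠ 0) (hdvd : P ∣ (X ^ Fintype.card F ^ n - X : F[X])) :
    P.natDegree ∣ n := by
  haveI : Fact (Irreducible P) := ⟨hirr⟩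
  letI : Module.Finite F (AdjoinRoot P) :=
    Module.Finite.of_basis (AdjoinRoot.powerBasis' hm).basis
  letI : Finite (AdjoinRoot P) := Module.finite_of_finite F
  letI : Fintype (AdjoinRoot P) := Fintype.ofFinite _
  set K := AdjoinRoot P with hK
  have hcard : Fintype.card K = Fintype.card F ^ P.natDegree := by
    rw [Module.card_eq_pow_finrank (K := F) (V := K)]
    congr 1
    have := Module.finrank_eq_card_basis (AdjoinRoot.powerBasis' hm).basis
    exact (AdjoinRoot.powerBasis' hm).finrank
  -- the root satisfies x ^ q ^ n = x
  have hroot : (AdjoinRoot.root P) ^ Fintype.card F ^ n = AdjoinRoot.root P := by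
    obtain ⟨g, hg⟩ := hdvd
    have : (Polynomial.aeval (AdjoinRoot.root P)) (X ^ Fintype.card F ^ n - X : F[X]) = 0 := by
      rw [hg, map_mul]
      have : (Polynomial.aeval (AdjoinRoot.root P)) P = 0 := by
        rw [AdjoinRoot.aeval_eq, AdjoinRoot.mk_self]
      rw [this, zero_mul]
    rw [map_sub, map_pow, aeval_X, sub_eq_zero] at this
    exact this
  -- every element of K satisfies x ^ q ^ n = x
  obtain ⟨p, hCharP⟩ := CharP.exists F
  haveI : CharP F p := hCharP
  obtain ⟨k, hp, hqk⟩ := FiniteField.card F p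
  haveI : Fact p.Prime := ⟨hp⟩
  haveI : CharP K p := charP_of_injective_algebraMap (algebraMap F K).injective p
  haveI : ExpChar K p := ExpChar.prime hp
  have hpow : Fintype.card F ^ n = p ^ ((k : ℕ) * n) := by rw [hqk, ← pow_mul]
  have hFfix : ∀ c : F, (algebraMap F K) c ^ Fintype.card F ^ n = (algebraMap F K) c := by
    intro c
    rw [← map_pow, FiniteField.pow_card_pow]
  let ψ : K →ₐ[F] K :=
    { toRingHom := iterateFrobenius K p ((k : ℕ) * n),
      commutes' := fun c => by
        rw [RingHom.toMonoidHom_eq_coe]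
        show iterateFrobenius K p ((k : ℕ) * n) ((algebraMap F K) c) = (algebraMap F K) c
        rw [iterateFrobenius_def, ← hpow, hFfix] }
  have hψ : ∀ x : K, x ^ Fintype.card F ^ n = x := by
    have htop : Algebra.adjoin F ({AdjoinRoot.root P} : Set K) ≤
        AlgHom.equalizer ψ (AlgHom.id F K) := by
      rw [Algebra.adjoin_le_iff, Set.singleton_subset_iff]
      show ψ (AdjoinRoot.root P) = AdjoinRoot.root P
      show iterateFrobenius K p ((k : ℕ) * n) (AdjoinRoot.root P) = AdjoinRoot.root P
      rw [iterateFrobenius_def, ← hpow, hroot]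
    rw [AdjoinRoot.adjoinRoot_eq_top] at htop
    intro x
    have hx : x ∈ AlgHom.equalizer ψ (AlgHom.id F K) := htop (by trivial)
    have := (AlgHom.mem_equalizer ψ (AlgHom.id F K) x).mp hx
    simpa [ψ, iterateFrobenius_def, ← hpow] using this
  -- conclude via a generator of Kˣ
  obtain ⟨g, hg⟩ := IsCyclic.exists_generator (α := Kˣ)
  letI : DecidableEq K := Classical.decEq _
  have horder : orderOf g = Fintype.card F ^ P.natDegree - 1 := by
    rw [orderOf_eq_card_of_forall_mem_zpowers hg, Nat.card_eq_fintype_card,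
      Fintype.card_units, hcard]
  have hq2 : 2 ≤ Fintype.card F := Fintype.one_lt_card
  have hgpow : g ^ (Fintype.card F ^ n - 1) = 1 := by
    have h1 : (g : K) ^ Fintype.card F ^ n = (g : K) := hψ g
    have h2 : g ^ Fintype.card F ^ n = g := Units.ext (by rw [Units.val_pow_eq_pow_val]; exact h1)
    have h3 : g ^ (Fintype.card F ^ n - 1) * g = 1 * g := by
      rw [one_mul, ← pow_succ, Nat.sub_add_cancel (Nat.one_le_pow _ _ (by omega)), h2]
    exact mul_right_cancel h3
  have hdvd' : Fintype.card F ^ P.natDegree - 1 ∣ Fintype.card F ^ n - 1 := by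
    rw [← horder]; exact orderOf_dvd_of_pow_eq_one hgpow
  exact natDvd_of_pow_sub_one_dvd hq2 hirr.natDegree_pos.ne' hdvd'

end AlgebraCore

section Counting

lemma irrF_coprime {n m : ℕ} {P Q : F[X]} (hP : P ∈ irrF F n) (hQ : Q ∈ irrF F m)
    (hPQ : P ≠ Q) : IsCoprime P Q := by
  obtain ⟨hPm, hPi, _⟩ := mem_irrF.mp hP
  obtain ⟨hQm, hQi, _⟩ := mem_irrF.mp hQ
  refine hPi.coprime_iff_not_dvd.mpr (fun hdvd => hPQ ?_)
  exact Polynomial.eq_of_monic_of_associated hPm hQm (hPi.associated_of_dvd hQi hdvd)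

lemma mul_card_irrF_le (n : ℕ) : n * (irrF F n).card ≤ Fintype.card F ^ n := by
  rcases Nat.eq_zero_or_pos n with rfl | hn
  · simp
  have hq2 : 2 ≤ Fintype.card F := Fintype.one_lt_card
  have hq : 1 < Fintype.card F ^ n := Nat.one_lt_pow hn.ne' (by omega)
  have hne : (X ^ Fintype.card F ^ n - X : F[X]) ≠ 0 :=
    FiniteField.X_pow_card_sub_X_ne_zero _ hq
  have hdeg : (X ^ Fintype.card F ^ n - X : F[X]).natDegree = Fintype.card F ^ n :=
    FiniteField.X_pow_card_sub_X_natDegree_eq _ hq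
  have hprod : (∏ P ∈ irrF F n, P) ∣ (X ^ Fintype.card F ^ n - X : F[X]) := by
    apply Finset.prod_dvd_of_coprime (s := fun P => P)
    · intro P hP Q hQ hPQ
      exact irrF_coprime (Finset.mem_coe.mp hP) (Finset.mem_coe.mp hQ) hPQ
    · intro P hP
      obtain ⟨hPm, hPi, hPd⟩ := mem_irrF.mp hP
      have := irr_dvd_galoisPoly hPm hPi
      rwa [hPd] at this
  have hd2 := Polynomial.natDegree_le_of_dvd hprod hne
  rw [hdeg] at hd2
  have hsum : (∏ P ∈ irrF F n, P).natDegree = ∑ P ∈ irrF F n, P.natDegree :=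
    Polynomial.natDegree_prod _ _ (fun P hP => (mem_irrF.mp hP).2.1.ne_zero)
  have hconst : ∑ P ∈ irrF F n, P.natDegree = (irrF F n).card * n :=
    Finset.sum_const_nat (fun P hP => (mem_irrF.mp hP).2.2)
  calc n * (irrF F n).card = (irrF F n).card * n := Nat.mul_comm _ _
  _ = (∏ P ∈ irrF F n, P).natDegree := by rw [hsum, hconst]
  _ ≤ Fintype.card F ^ n := hd2

lemma geom_sum_aux {q : ℕ} (hq : 2 ≤ q) (m : ℕ) :
    ∑ d ∈ Finset.Icc 1 m, q ^ d ≤ 2 * q ^ m := by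
  induction m with
  | zero => simp
  | succ m ih =>
    rw [Finset.sum_Icc_succ_top (by omega)]
    have h1 : 2 * q ^ m ≤ q ^ (m + 1) := by
      rw [pow_succ']
      exact Nat.mul_le_mul_right _ hq
    omega

lemma counting_lower (n : ℕ) (hn : n ≠ 0) :
    Fintype.card F ^ n ≤ n * (irrF F n).card + 2 * Fintype.card F ^ (n / 2) := by
  classical
  have hq2 : 2 ≤ Fintype.card F := Fintype.one_lt_card
  have hq : 1 < Fintype.card F ^ n := Nat.one_lt_pow hn (by omega)
  set f := (X ^ Fintype.card F ^ n - X : F[X]) with hf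
  have hne : f ≠ 0 := FiniteField.X_pow_card_sub_X_ne_zero _ hq
  have hdeg : f.natDegree = Fintype.card F ^ n :=
    FiniteField.X_pow_card_sub_X_natDegree_eq _ hq
  -- squarefree
  obtain ⟨p, hCharP⟩ := CharP.exists F
  haveI : CharP F p := hCharP
  obtain ⟨k, hp, hqk⟩ := FiniteField.card F p
  have hpq : p ∣ Fintype.card F ^ n := by
    refine dvd_pow ?_ hn
    rw [hqk]
    exact dvd_pow_self p k.pos.ne'
  have hsq : Squarefree f := (galois_poly_separable p _ hpq).squarefree
  set T : Finset F[X] := n.divisors.biUnion (fun d => irrF F d) with hT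
  -- f divides the product over T
  have hfT : f ∣ ∏ P ∈ T, P := by
    have hassoc : Associated (UniqueFactorizationMonoid.normalizedFactors f).prod f :=
      UniqueFactorizationMonoid.prod_normalizedFactors hne
    have nodup : (UniqueFactorizationMonoid.normalizedFactors f).Nodup :=
      (UniqueFactorizationMonoid.squarefree_iff_nodup_normalizedFactors hne).mp hsq
    have hsub : (UniqueFactorizationMonoid.normalizedFactors f).toFinset ⊆ T := by
      intro Q hQ
      rw [Multiset.mem_toFinset] at hQ
      have hirr := UniqueFactorizationMonoid.irreducible_of_normalized_factor _ hQ
      have hmon : Q.Monic := by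
        have h1 := Polynomial.monic_normalize (p := Q) hirr.ne_zero
        rwa [UniqueFactorizationMonoid.normalize_normalized_factor _ hQ] at h1
      have hdvd : Q ∣ f := UniqueFactorizationMonoid.dvd_of_mem_normalizedFactors hQ
      have hddvd : Q.natDegree ∣ n := natDegree_dvd_of_dvd_galoisPoly hmon hirr hn hdvd
      refine Finset.mem_biUnion.mpr ⟨Q.natDegree, Nat.mem_divisors.mpr ⟨hddvd, hn⟩, ?_⟩
      exact mem_irrF.mpr ⟨hmon, hirr, rfl⟩
    have hps : ∏ P ∈ (UniqueFactorizationMonoid.normalizedFactors f).toFinset, P ∣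
        ∏ P ∈ T, P := Finset.prod_dvd_prod_of_subset _ _ _ hsub
    have heq : ∏ P ∈ (UniqueFactorizationMonoid.normalizedFactors f).toFinset, P =
        (UniqueFactorizationMonoid.normalizedFactors f).prod := by
      rw [Finset.prod, Multiset.toFinset_val, Multiset.dedup_eq_self.mpr nodup]
      exact congrArg Multiset.prod (Multiset.map_id _)
    exact hassoc.symm.dvd.trans (heq ▸ hps)
  -- degree accounting
  have hTne : (∏ P ∈ T, P) ≠ 0 := by
    apply Finset.prod_ne_zero_iff.mpr
    intro P hP
    obtain ⟨d, _, hPd⟩ := Finset.mem_biUnion.mp hP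
    exact (mem_irrF.mp hPd).2.1.ne_zero
  have hdle := Polynomial.natDegree_le_of_dvd hfT hTne
  rw [hdeg] at hdle
  have hdisj : (↑n.divisors : Set ℕ).PairwiseDisjoint (fun d => irrF F d) := by
    intro a _ b _ hab
    refine Finset.disjoint_left.mpr (fun P hPa hPb => hab ?_)
    rw [← (mem_irrF.mp hPa).2.2, ← (mem_irrF.mp hPb).2.2]
  have hprodT : (∏ P ∈ T, P).natDegree = ∑ d ∈ n.divisors, d * (irrF F d).card := by
    rw [Polynomial.natDegree_prod _ _
      (fun P hP => by
        obtain ⟨d, _, hPd⟩ := Finset.mem_biUnion.mp hP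
        exact (mem_irrF.mp hPd).2.1.ne_zero), hT, Finset.sum_biUnion hdisj]
    refine Finset.sum_congr rfl (fun d _ => ?_)
    rw [Finset.sum_const_nat (fun P hP => (mem_irrF.mp hP).2.2), Nat.mul_comm]
  rw [hprodT] at hdle
  -- split the sum
  have hmem : n ∈ n.divisors := Nat.mem_divisors_self n hn
  rw [← Finset.add_sum_erase _ _ hmem] at hdle
  have hrest : ∑ d ∈ n.divisors.erase n, d * (irrF F d).card ≤ 2 * Fintype.card F ^ (n / 2) := by
    calc ∑ d ∈ n.divisors.erase n, d * (irrF F d).card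
        ≤ ∑ d ∈ n.divisors.erase n, Fintype.card F ^ d :=
          Finset.sum_le_sum (fun d _ => mul_card_irrF_le d)
      _ ≤ ∑ d ∈ Finset.Icc 1 (n / 2), Fintype.card F ^ d := by
          refine Finset.sum_le_sum_of_subset (fun d hd => ?_)
          rw [Finset.mem_erase] at hd
          obtain ⟨hdne, hddvd⟩ := hd
          rw [Nat.mem_divisors] at hddvd
          obtain ⟨⟨m, hm⟩, _⟩ := hddvd
          have hd0 : d ≠ 0 := by rintro rfl; simp at hm; exact hn hm
          have hm2 : 2 ≤ m := by
            rcases m with _ | _ | m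
            · simp at hm; exact absurd hm hn
            · simp at hm; exact absurd hm.symm hdne
            · omega
          refine Finset.mem_Icc.mpr ⟨by omega, ?_⟩
          rw [Nat.le_div_iff_mul_le (by omega)]
          calc d * 2 ≤ d * m := Nat.mul_le_mul_left _ hm2
          _ = n := hm.symm
      _ ≤ 2 * Fintype.card F ^ (n / 2) := geom_sum_aux hq2 _
  omega

end Counting

section Analysis

open Real

/-- error term -/
def eTerm (F : Type) [Field F] [Fintype F] (n : ℕ) : ℝ :=
  if n = 0 then 0 else ((irrF F n).card : ℝ) / (Fintype.card F : ℝ) ^ n - 1 / n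

lemma sqrt_card_ge : (1:ℝ) ≤ Real.sqrt (Fintype.card F) := by
  rw [show (1:ℝ) = Real.sqrt 1 by rw [Real.sqrt_one]]
  apply Real.sqrt_le_sqrt
  have : 2 ≤ Fintype.card F := Fintype.one_lt_card
  exact_mod_cast Nat.one_le_iff_ne_zero.mpr (by omega)

lemma abs_eTerm_le (n : ℕ) :
    |eTerm F n| ≤ 2 * ((Real.sqrt (Fintype.card F))⁻¹) ^ n := by
  set q : ℕ := Fintype.card F with hqdef
  have hq2 : 2 ≤ q := Fintype.one_lt_card
  set s : ℝ := Real.sqrt q with hs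
  have hs1 : (1:ℝ) ≤ s := sqrt_card_ge
  have hs0 : (0:ℝ) < s := lt_of_lt_of_le one_pos hs1
  rcases Nat.eq_zero_or_pos n with rfl | hn
  · simp [eTerm]
  have hn' : n ≠ 0 := hn.ne'
  have hqR : (0:ℝ) < (q:ℝ) := by positivity
  have hqpow : (0:ℝ) < (q:ℝ) ^ n := by positivity
  have hnR : (0:ℝ) < (n:ℝ) := by exact_mod_cast hn
  have hupper : ((irrF F n).card : ℝ) / (q:ℝ) ^ n - 1 / n ≤ 0 := by
    have h1' := mul_card_irrF_le (F := F) n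
    rw [← hqdef] at h1'
    have h1 : (n:ℝ) * ((irrF F n).card : ℝ) ≤ (q:ℝ) ^ n := by exact_mod_cast h1'
    rw [sub_nonpos, div_le_div_iff₀ hqpow hnR, one_mul]
    calc ((irrF F n).card : ℝ) * n = n * ((irrF F n).card : ℝ) := by ring
    _ ≤ (q:ℝ) ^ n := h1
  -- relation q ^ m and s
  have hq_eq : ∀ m : ℕ, (q:ℝ) ^ m = s ^ (2 * m) := by
    intro m
    rw [pow_mul, hs, Real.sq_sqrt (le_of_lt hqR)]
  have hhalf : (q:ℝ) ^ (n / 2) ≤ s ^ n := by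
    rw [hq_eq]
    exact pow_le_pow_right₀ hs1 (by omega)
  have hlower : -(2 * (s⁻¹) ^ n) ≤ ((irrF F n).card : ℝ) / (q:ℝ) ^ n - 1 / n := by
    have h1' := counting_lower (F := F) n hn'
    rw [← hqdef] at h1'
    have h1 : (q:ℝ) ^ n ≤ n * ((irrF F n).card : ℝ) + 2 * (q:ℝ) ^ (n / 2) := by exact_mod_cast h1'
    have key : (1:ℝ)/n ≤ ((irrF F n).card : ℝ) / (q:ℝ)^n + 2 * (q:ℝ)^(n/2) / (q:ℝ)^n := by
      rw [← add_div, div_le_div_iff₀ hnR hqpow, one_mul]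
      have hn1 : (1:ℝ) ≤ (n:ℝ) := by exact_mod_cast hn
      have h2 : (2:ℝ) * (q:ℝ)^(n/2) ≤ (n:ℝ) * (2 * (q:ℝ)^(n/2)) :=
        le_mul_of_one_le_left (by positivity) hn1
      calc (q:ℝ) ^ n ≤ (n:ℝ) * ((irrF F n).card : ℝ) + 2 * (q:ℝ)^(n/2) := h1
      _ ≤ (n:ℝ) * ((irrF F n).card : ℝ) + (n:ℝ) * (2 * (q:ℝ)^(n/2)) := by linarith
      _ = (((irrF F n).card : ℝ) + 2 * (q:ℝ)^(n/2)) * n := by ring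
    have h3 : 2 * (q:ℝ)^(n/2) / (q:ℝ)^n ≤ 2 * (s⁻¹)^n := by
      have hsn : (0:ℝ) < s ^ n := pow_pos hs0 n
      have hqn : (q:ℝ) ^ n = s ^ n * s ^ n := by
        rw [hq_eq, two_mul, pow_add]
      rw [hqn]
      calc 2 * (q:ℝ)^(n/2) / (s^n * s^n) ≤ 2 * s^n / (s^n * s^n) := by
            gcongr
      _ = 2 * (s⁻¹)^n := by
            have hne : s ^ n ≠ 0 := (pow_pos hs0 n).ne'
            rw [inv_pow, mul_comm (2:ℝ) (s^n), mul_div_mul_left _ _ hne, div_eq_mul_inv]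
    linarith
  rw [abs_le]
  constructor
  · simpa [eTerm, hn'] using hlower
  · have : (0:ℝ) ≤ 2 * (s⁻¹)^n := by positivity
    simp only [eTerm, hn', if_false]
    linarith

lemma tail_bound {r : ℝ} (h0 : 0 ≤ r) (h1 : r < 1) {g : ℕ → ℝ}
    (hg : ∀ n, |g n| ≤ 2 * r ^ n) (N : ℕ) :
    |(∑' n, g n) - ∑ n ∈ Finset.range N, g n| ≤ 2 * r ^ N / (1 - r) := by
  have hgeo : Summable (fun n : ℕ => 2 * r ^ n) :=
    (summable_geometric_of_lt_one h0 h1).mul_left 2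
  have hsum : Summable g :=
    Summable.of_norm_bounded hgeo (fun n => by simpa using hg n)
  have hkey : ∑ i ∈ Finset.range N, g i + ∑' i, g (i + N) = ∑' i, g i :=
    Summable.sum_add_tsum_nat_add N hsum
  rw [← hkey, add_sub_cancel_left]
  have htail : Summable (fun n : ℕ => g (n + N)) := (summable_nat_add_iff N).mpr hsum
  have hbfun : (fun n : ℕ => 2 * r ^ (n + N)) = fun n : ℕ => (2 * r ^ N) * r ^ n := by
    funext n; rw [pow_add]; ring
  have hb : Summable (fun n : ℕ => 2 * r ^ (n + N)) := by
    rw [hbfun]; exact (summable_geometric_of_lt_one h0 h1).mul_left _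
  calc |∑' i, g (i + N)| ≤ ∑' i, |g (i + N)| := by
        simpa using norm_tsum_le_tsum_norm (f := fun n : ℕ => g (n + N)) (by simpa using htail.abs)
  _ ≤ ∑' i : ℕ, 2 * r ^ (i + N) := Summable.tsum_le_tsum (fun i => hg _) htail.abs hb
  _ = 2 * r ^ N * (1 - r)⁻¹ := by
        rw [hbfun, tsum_mul_left, tsum_geometric_of_lt_one h0 h1]
  _ = 2 * r ^ N / (1 - r) := (div_eq_mul_inv _ _).symm

lemma log_succ_sub (N : ℕ) (hN : N ≠ 0) :
    Real.log (N + 1) - Real.log N ≤ 1 / N := by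
  have hNpos : (0:ℝ) < N := by exact_mod_cast Nat.pos_of_ne_zero hN
  rw [← Real.log_div (by positivity) (by positivity)]
  have h := Real.log_le_sub_one_of_pos (show (0:ℝ) < ((N:ℝ)+1)/N by positivity)
  have heq : ((N:ℝ)+1)/N - 1 = 1/N := by field_simp; ring
  linarith

lemma harmonic_real (N : ℕ) : ((harmonic N : ℚ) : ℝ) = ∑ n ∈ Finset.Icc 1 N, 1/(n:ℝ) := by
  induction N with
  | zero => simp [harmonic]
  | succ N ih =>
    rw [harmonic_succ, Finset.sum_Icc_succ_top (Nat.succ_le_succ (Nat.zero_le N)), ← ih]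
    push_cast
    ring

lemma harmonic_bound (N : ℕ) (hN : N ≠ 0) :
    |((harmonic N : ℚ) : ℝ) - Real.log N - Real.eulerMascheroniConstant| ≤ 1 / N := by
  have hNpos : (0:ℝ) < N := by exact_mod_cast Nat.pos_of_ne_zero hN
  have h1 := Real.eulerMascheroniConstant_lt_eulerMascheroniSeq' N
  rw [Real.eulerMascheroniSeq', if_neg hN] at h1
  have h2 := Real.eulerMascheroniSeq_lt_eulerMascheroniConstant N
  rw [Real.eulerMascheroniSeq] at h2
  have hlog := log_succ_sub N hN
  rw [abs_le]
  constructor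
  · have : (0:ℝ) < 1/N := by positivity
    linarith
  · push_cast at h2 ⊢
    linarith

lemma rpow_le_two_div (N : ℕ) (hN : N ≠ 0) :
    ((Real.sqrt (Fintype.card F))⁻¹) ^ N ≤ 2 / N := by
  set s : ℝ := Real.sqrt (Fintype.card F) with hs
  have hq2 : 2 ≤ Fintype.card F := Fintype.one_lt_card
  have hs2 : Real.sqrt 2 ≤ s := Real.sqrt_le_sqrt (by exact_mod_cast hq2)
  have hsqrt2 : (1:ℝ) ≤ Real.sqrt 2 := by
    rw [show (1:ℝ) = Real.sqrt 1 by rw [Real.sqrt_one]]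
    exact Real.sqrt_le_sqrt (by norm_num)
  have hs1 : (1:ℝ) ≤ s := le_trans hsqrt2 hs2
  have hs0 : (0:ℝ) < s := lt_of_lt_of_le one_pos hs1
  have hNpos : (0:ℝ) < N := by exact_mod_cast Nat.pos_of_ne_zero hN
  have hnat : N ≤ 2 * 2 ^ (N / 2) := by
    have h := Nat.lt_two_pow_self (n := N / 2)
    generalize 2 ^ (N / 2) = M at h ⊢
    omega
  have h1 : ((2:ℝ)) ^ (N/2 : ℕ) ≤ s ^ N := by
    have e1 : ((2:ℝ)) ^ (N/2 : ℕ) = (Real.sqrt 2) ^ (2 * (N/2)) := by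
      rw [pow_mul, Real.sq_sqrt (by norm_num : (0:ℝ) ≤ 2)]
    rw [e1]
    calc (Real.sqrt 2) ^ (2 * (N/2)) ≤ (Real.sqrt 2) ^ N :=
          pow_le_pow_right₀ hsqrt2 (by omega)
    _ ≤ s ^ N := pow_le_pow_left₀ (by positivity) hs2 N
  have hreal : (N:ℝ) ≤ 2 * s ^ N := by
    have h2 : (N:ℝ) ≤ 2 * (2:ℝ) ^ (N/2 : ℕ) := by exact_mod_cast hnat
    linarith
  have hspos : (0:ℝ) < s ^ N := pow_pos hs0 N
  rw [inv_pow, inv_eq_one_div, div_le_div_iff₀ hspos hNpos, one_mul]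
  linarith

/-- the constant `E = Σ e_n`. -/
def mertensE (F : Type) [Field F] [Fintype F] : ℝ := ∑' n, eTerm F n

lemma sum_est (N : ℕ) (hN : N ≠ 0) :
    |(∑ n ∈ Finset.Icc 1 N, ((irrF F n).card : ℝ) / (Fintype.card F : ℝ) ^ n)
      - Real.log N - Real.eulerMascheroniConstant - mertensE F| ≤ 16 / N := by
  have hq2 : 2 ≤ Fintype.card F := Fintype.one_lt_card
  set s : ℝ := Real.sqrt (Fintype.card F) with hs
  have hsqrt2 : (1:ℝ) ≤ Real.sqrt 2 := by
    rw [show (1:ℝ) = Real.sqrt 1 by rw [Real.sqrt_one]]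
    exact Real.sqrt_le_sqrt (by norm_num)
  have hs2 : Real.sqrt 2 ≤ s := Real.sqrt_le_sqrt (by exact_mod_cast hq2)
  have hs1 : (1:ℝ) ≤ s := le_trans hsqrt2 hs2
  have hs0 : (0:ℝ) < s := lt_of_lt_of_le one_pos hs1
  set r : ℝ := s⁻¹ with hr
  have hr0 : 0 ≤ r := by positivity
  have hr57 : r ≤ 5/7 := by
    have h75 : (7/5 : ℝ) ≤ Real.sqrt 2 := by
      rw [show (7/5:ℝ) = Real.sqrt ((7/5)^2) by rw [Real.sqrt_sq (by norm_num)]]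
      exact Real.sqrt_le_sqrt (by norm_num)
    have h75' : (7/5 : ℝ) ≤ s := le_trans h75 hs2
    rw [hr]
    rw [inv_le_comm₀ hs0 (by norm_num : (0:ℝ) < 5/7)]
    calc (5/7 : ℝ)⁻¹ = 7/5 := by norm_num
    _ ≤ s := h75'
  have hr1 : r < 1 := lt_of_le_of_lt hr57 (by norm_num)
  have hNpos : (0:ℝ) < N := by exact_mod_cast Nat.pos_of_ne_zero hN
  -- split the sum
  have hsplit : (∑ n ∈ Finset.Icc 1 N, ((irrF F n).card : ℝ) / (Fintype.card F : ℝ) ^ n)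
      = ((harmonic N : ℚ) : ℝ) + ∑ n ∈ Finset.range (N+1), eTerm F n := by
    have hIccr : Finset.range (N+1) = Finset.Icc 0 N := by
      rw [Finset.range_eq_Ico, Finset.Ico_add_one_right_eq_Icc]
    have h0 : (0:ℕ) ∉ Finset.Icc 1 N := by simp
    have hins : Finset.Icc 0 N = insert 0 (Finset.Icc 1 N) := by
      ext i
      simp only [Finset.mem_Icc, Finset.mem_insert]
      omega
    rw [hIccr, hins, Finset.sum_insert h0, harmonic_real]
    have he0 : eTerm F 0 = 0 := by simp [eTerm]
    rw [he0, zero_add, ← Finset.sum_add_distrib]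
    refine Finset.sum_congr rfl (fun n hn => ?_)
    have hn0 : n ≠ 0 := by
      rw [Finset.mem_Icc] at hn; omega
    rw [eTerm, if_neg hn0]
    ring
  -- tail bound
  have htail := tail_bound hr0 hr1 (g := eTerm F) (fun n => abs_eTerm_le n) (N+1)
  have hrpow : r ^ N ≤ 2 / N := rpow_le_two_div N hN
  have hb1 : 2 * r ^ (N+1) / (1 - r) ≤ 14 / N := by
    have h17 : (1 - r)⁻¹ ≤ 7/2 := by
      rw [inv_le_comm₀ (by linarith) (by norm_num)]
      linarith
    have hrp : r ^ (N+1) ≤ r ^ N := by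
      calc r ^ (N+1) = r ^ N * r := pow_succ r N
      _ ≤ r ^ N * 1 := by
          apply mul_le_mul_of_nonneg_left (le_of_lt hr1) (by positivity)
      _ = r ^ N := mul_one _
    have hpow0 : (0:ℝ) ≤ r ^ (N+1) := by positivity
    calc 2 * r ^ (N+1) / (1 - r) = 2 * r ^ (N+1) * (1 - r)⁻¹ := div_eq_mul_inv _ _
    _ ≤ 2 * r ^ (N+1) * (7/2) := by
        apply mul_le_mul_of_nonneg_left h17 (by positivity)
    _ = 7 * r ^ (N+1) := by ring
    _ ≤ 7 * r ^ N := by linarith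
    _ ≤ 7 * (2 / N) := by linarith
    _ = 14 / N := by ring
  have hharm := harmonic_bound N hN
  rw [hsplit]
  have habs : |(∑ n ∈ Finset.range (N+1), eTerm F n) - mertensE F| ≤ 14 / N := by
    rw [abs_sub_comm]
    exact le_trans (htail) hb1
  calc |((harmonic N : ℚ) : ℝ) + (∑ n ∈ Finset.range (N+1), eTerm F n)
        - Real.log N - Real.eulerMascheroniConstant - mertensE F|
      = |(((harmonic N : ℚ) : ℝ) - Real.log N - Real.eulerMascheroniConstant)
        + ((∑ n ∈ Finset.range (N+1), eTerm F n) - mertensE F)| := by ring_nf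
  _ ≤ |((harmonic N : ℚ) : ℝ) - Real.log N - Real.eulerMascheroniConstant|
        + |(∑ n ∈ Finset.range (N+1), eTerm F n) - mertensE F| := abs_add_le _ _
  _ ≤ 1 / N + 14 / N := by linarith
  _ ≤ 16 / N := by
      rw [← add_div]
      gcongr
      norm_num

end Analysis

section FinsumEq

lemma irrF_disjoint (s : Set ℕ) :
    s.PairwiseDisjoint (fun d => irrF F d) := by
  intro a _ b _ hab
  refine Finset.disjoint_left.mpr (fun P hPa hPb => hab ?_)
  rw [← (mem_irrF.mp hPa).2.2, ← (mem_irrF.mp hPb).2.2]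

lemma pow_le_iff_le_floor (x : ℝ) (hx : 2 ≤ x) (d : ℕ) :
    (Fintype.card F : ℝ) ^ d ≤ x ↔
      d ≤ Nat.floor (Real.log x / Real.log (Fintype.card F)) := by
  have hq1 : (1:ℝ) < (Fintype.card F : ℝ) := by exact_mod_cast Fintype.one_lt_card
  have hq0 : (0:ℝ) < (Fintype.card F : ℝ) := by linarith
  have hlogq : 0 < Real.log (Fintype.card F) := Real.log_pos hq1
  have hx0 : (0:ℝ) < x := by linarith
  have hlogx : 0 ≤ Real.log x := Real.log_nonneg (by linarith)
  constructor
  · intro h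
    apply Nat.le_floor
    rw [le_div_iff₀ hlogq]
    calc (d:ℝ) * Real.log (Fintype.card F)
        = Real.log ((Fintype.card F : ℝ) ^ d) := (Real.log_pow ((Fintype.card F : ℝ)) d).symm
    _ ≤ Real.log x := (Real.log_le_log_iff (by positivity) hx0).mpr h
  · intro h
    have h1 : (d:ℝ) ≤ Real.log x / Real.log (Fintype.card F) := by
      calc (d:ℝ) ≤ (Nat.floor (Real.log x / Real.log (Fintype.card F)) : ℝ) := by
            exact_mod_cast h
      _ ≤ _ := Nat.floor_le (by positivity)
    rw [le_div_iff₀ hlogq] at h1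
    have h2 : Real.log ((Fintype.card F : ℝ) ^ d) ≤ Real.log x := by
      rw [Real.log_pow]; exact h1
    exact (Real.log_le_log_iff (by positivity) hx0).mp h2

lemma finsum_eq (x : ℝ) (hx : 2 ≤ x) :
    (∑ᶠ P ∈ {P : F[X] | P.Monic ∧ Irreducible P ∧ fqNorm P ≤ x}, 1 / fqNorm P)
      = ∑ n ∈ Finset.Icc 1 (Nat.floor (Real.log x / Real.log (Fintype.card F))),
          ((irrF F n).card : ℝ) / (Fintype.card F : ℝ) ^ n := by
  classical
  set N := Nat.floor (Real.log x / Real.log (Fintype.card F)) with hN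
  have hset : {P : F[X] | P.Monic ∧ Irreducible P ∧ fqNorm P ≤ x}
      = ↑((Finset.Icc 1 N).biUnion (fun n => irrF F n)) := by
    ext P
    simp only [Set.mem_setOf_eq, Finset.coe_biUnion, Set.mem_iUnion, Finset.mem_coe]
    constructor
    · rintro ⟨hm, hi, hle⟩
      refine ⟨P.natDegree, Finset.mem_Icc.mpr ⟨hi.natDegree_pos, ?_⟩,
        mem_irrF.mpr ⟨hm, hi, rfl⟩⟩
      rw [fqNorm, if_neg hm.ne_zero] at hle
      exact (pow_le_iff_le_floor x hx _).mp hle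
    · rintro ⟨n, hn, hP⟩
      obtain ⟨hm, hi, hd⟩ := mem_irrF.mp hP
      refine ⟨hm, hi, ?_⟩
      rw [fqNorm, if_neg hm.ne_zero, hd]
      exact (pow_le_iff_le_floor x hx _).mpr (Finset.mem_Icc.mp hn).2
  rw [hset, finsum_mem_coe_finset, Finset.sum_biUnion (irrF_disjoint _)]
  refine Finset.sum_congr rfl (fun n hn => ?_)
  have hterm : ∀ P ∈ irrF F n, 1 / fqNorm P = ((Fintype.card F : ℝ) ^ n)⁻¹ := by
    intro P hP
    obtain ⟨hm, hi, hd⟩ := mem_irrF.mp hP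
    rw [fqNorm, if_neg hm.ne_zero, hd, one_div]
  rw [Finset.sum_congr rfl hterm, Finset.sum_const, nsmul_eq_mul, div_eq_mul_inv]

end FinsumEq

end MertensFF


/-- Mertens-type estimate over `F_q[T]`: there is a constant `b` with
`Σ_{|P| ≤ x} 1/|P| = log log x + b + O(1/log x)`,
the sum running over monic irreducible polynomials. -/
theorem mertens_second (F : Type) [Field F] [Fintype F] :
    ∃ b C : ℝ, 0 < C ∧
      ∀ x : ℝ, 2 ≤ x →
        |(∑ᶠ P ∈ {P : F[X] | P.Monic ∧ Irreducible P ∧ fqNorm P ≤ x},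
            1 / fqNorm P) - Real.log (Real.log x) - b| ≤ C / Real.log x := by
  classical
  have hq2 : 2 ≤ Fintype.card F := Fintype.one_lt_card
  have hq1 : (1:ℝ) < (Fintype.card F : ℝ) := by exact_mod_cast hq2
  obtain ⟨L, hLdef⟩ : ∃ L : ℝ, Real.log (Fintype.card F) = L := ⟨_, rfl⟩
  have hL0 : 0 < L := hLdef ▸ Real.log_pos hq1
  obtain ⟨E, hEdef⟩ : ∃ E : ℝ, MertensFF.mertensE F = E := ⟨_, rfl⟩
  obtain ⟨γ, hγdef⟩ : ∃ g : ℝ, Real.eulerMascheroniConstant = g := ⟨_, rfl⟩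
  refine ⟨γ + E - Real.log L,
    32 * L + 2 * L * (1 + |Real.log (Real.log 2)| + |Real.log (2*L)|
      + |γ + E - Real.log L|), ?_, ?_⟩
  · have h1 : (0:ℝ) ≤ |Real.log (Real.log 2)| := abs_nonneg _
    have h2 : (0:ℝ) ≤ |Real.log (2*L)| := abs_nonneg _
    have h3 : (0:ℝ) ≤ |γ + E - Real.log L| := abs_nonneg _
    nlinarith
  intro x hx
  set b : ℝ := γ + E - Real.log L with hb
  set M : ℝ := 1 + |Real.log (Real.log 2)| + |Real.log (2*L)| + |b| with hM
  have hM1 : 1 ≤ M := by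
    have h1 : (0:ℝ) ≤ |Real.log (Real.log 2)| := abs_nonneg _
    have h2 : (0:ℝ) ≤ |Real.log (2*L)| := abs_nonneg _
    have h3 : (0:ℝ) ≤ |b| := abs_nonneg _
    rw [hM]; linarith
  have hx0 : (0:ℝ) < x := by linarith
  have hlog2 : (0:ℝ) < Real.log 2 := Real.log_pos (by norm_num)
  have hlogx2 : Real.log 2 ≤ Real.log x := (Real.log_le_log_iff (by norm_num) hx0).mpr hx
  have hlogx0 : 0 < Real.log x := lt_of_lt_of_le hlog2 hlogx2
  set N := Nat.floor (Real.log x / L) with hN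
  have hkey : (∑ᶠ P ∈ {P : F[X] | P.Monic ∧ Irreducible P ∧ fqNorm P ≤ x}, 1 / fqNorm P)
      = ∑ n ∈ Finset.Icc 1 N, (((MertensFF.irrF F n).card : ℝ)) / (Fintype.card F : ℝ) ^ n := by
    rw [MertensFF.finsum_eq (F := F) x hx, hLdef]
  rw [hkey]
  rcases le_or_gt (2*L) (Real.log x) with hmain | hedge
  · -- main case
    have ht2 : (2:ℝ) ≤ Real.log x / L := (le_div_iff₀ hL0).mpr (by linarith)
    have hN2 : 2 ≤ N := by
      rw [hN]
      exact Nat.le_floor (by exact_mod_cast ht2)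
    have hN0 : N ≠ 0 := by omega
    have hNposR : (0:ℝ) < N := by exact_mod_cast Nat.pos_of_ne_zero hN0
    have hest := MertensFF.sum_est (F := F) N hN0
    rw [hEdef, hγdef] at hest
    have hfloor_le : (N:ℝ) ≤ Real.log x / L := by
      rw [hN]; exact Nat.floor_le (by positivity)
    have hlt : Real.log x / L < N + 1 := by
      rw [hN]; exact Nat.lt_floor_add_one _
    have htpos : (0:ℝ) < Real.log x / L := by positivity
    have hlogN1 : Real.log N ≤ Real.log (Real.log x / L) :=
      (Real.log_le_log_iff hNposR htpos).mpr hfloor_le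
    have hlogN2 : Real.log (Real.log x / L) ≤ Real.log ((N:ℝ)+1) :=
      (Real.log_le_log_iff htpos (by positivity)).mpr (le_of_lt hlt)
    have hls := MertensFF.log_succ_sub N hN0
    have hld : Real.log (Real.log x / L) = Real.log (Real.log x) - Real.log L :=
      Real.log_div (ne_of_gt hlogx0) (ne_of_gt hL0)
    have h2 : |Real.log N - (Real.log (Real.log x) - Real.log L)| ≤ 1/N := by
      rw [← hld, abs_le]
      constructor
      · linarith
      · have : (0:ℝ) < 1/N := by positivity
        linarith
    have hcomb : |(∑ n ∈ Finset.Icc 1 N,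
          ((MertensFF.irrF F n).card : ℝ) / (Fintype.card F:ℝ)^n)
        - Real.log (Real.log x) - b| ≤ 17/N := by
      have heq : (∑ n ∈ Finset.Icc 1 N,
            ((MertensFF.irrF F n).card : ℝ) / (Fintype.card F:ℝ)^n)
          - Real.log (Real.log x) - b
          = ((∑ n ∈ Finset.Icc 1 N,
            ((MertensFF.irrF F n).card : ℝ) / (Fintype.card F:ℝ)^n)
            - Real.log N - γ - E)
            + (Real.log N - (Real.log (Real.log x) - Real.log L)) := by
        rw [hb]; ring
      rw [heq]
      calc |_ + _| ≤ _ + _ := abs_add_le _ _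
      _ ≤ 16/(N:ℝ) + 1/N := add_le_add hest h2
      _ = 17/N := by rw [← add_div]; norm_num
    refine le_trans hcomb ?_
    have h5 : 1 ≤ Real.log x / (2*L) := (le_div_iff₀ (by positivity)).mpr (by linarith)
    have hhalf : Real.log x / (2*L) ≤ (N:ℝ) := by
      have he : Real.log x / L = 2 * (Real.log x / (2*L)) := by
        field_simp
      rw [he] at hlt
      linarith
    have htpos' : (0:ℝ) < Real.log x / (2*L) := by positivity
    calc 17/(N:ℝ) ≤ 17/(Real.log x / (2*L)) := by gcongr
    _ = 34*L/Real.log x := by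
        rw [div_div_eq_mul_div]; ring
    _ ≤ (32 * L + 2 * L * M)/Real.log x := by
        gcongr
        nlinarith
  · -- edge case
    have hNle : N ≤ 1 := by
      have ht : Real.log x / L < 2 := (div_lt_iff₀ hL0).mpr (by linarith)
      have h8 : N < 2 := by
        rw [hN]
        rw [Nat.floor_lt (by positivity : (0:ℝ) ≤ Real.log x / L)]
        exact_mod_cast ht
      omega
    have hterm : ∀ n ∈ Finset.Icc 1 N,
        ((MertensFF.irrF F n).card : ℝ) / (Fintype.card F:ℝ)^n ≤ 1 := by
      intro n hn
      have hn1 : 1 ≤ n := (Finset.mem_Icc.mp hn).1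
      have h := MertensFF.mul_card_irrF_le (F := F) n
      have hcardle : (MertensFF.irrF F n).card ≤ Fintype.card F ^ n := by
        calc (MertensFF.irrF F n).card = 1 * (MertensFF.irrF F n).card := (one_mul _).symm
        _ ≤ n * (MertensFF.irrF F n).card := Nat.mul_le_mul_right _ hn1
        _ ≤ _ := h
      rw [div_le_one (by positivity)]
      exact_mod_cast hcardle
    have hS1 : (∑ n ∈ Finset.Icc 1 N,
        ((MertensFF.irrF F n).card : ℝ)/(Fintype.card F:ℝ)^n) ≤ 1 := by
      calc (∑ n ∈ Finset.Icc 1 N,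
          ((MertensFF.irrF F n).card : ℝ)/(Fintype.card F:ℝ)^n)
          ≤ ∑ n ∈ Finset.Icc 1 N, (1:ℝ) := Finset.sum_le_sum hterm
      _ = (N:ℝ) := by rw [Finset.sum_const, Nat.card_Icc]; simp
      _ ≤ 1 := by exact_mod_cast hNle
    have hS0 : (0:ℝ) ≤ ∑ n ∈ Finset.Icc 1 N,
        ((MertensFF.irrF F n).card : ℝ)/(Fintype.card F:ℝ)^n :=
      Finset.sum_nonneg (fun n _ => by positivity)
    have hll1 : Real.log (Real.log x) ≤ Real.log (2*L) :=
      (Real.log_le_log_iff hlogx0 (by positivity)).mpr (le_of_lt hedge)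
    have hll2 : Real.log (Real.log 2) ≤ Real.log (Real.log x) :=
      (Real.log_le_log_iff hlog2 hlogx0).mpr hlogx2
    have habs : |(∑ n ∈ Finset.Icc 1 N,
        ((MertensFF.irrF F n).card : ℝ)/(Fintype.card F:ℝ)^n)
        - Real.log (Real.log x) - b| ≤ M := by
      rw [abs_le, hM]
      constructor
      · linarith [hS0, hll1, le_abs_self (Real.log (2*L)), le_abs_self b,
          abs_nonneg (Real.log (Real.log 2))]
      · linarith [hS1, hll2, neg_le_abs (Real.log (Real.log 2)), neg_abs_le b,
          abs_nonneg (Real.log (2*L))]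
    refine le_trans habs ?_
    rw [le_div_iff₀ hlogx0]
    have h7 : M * Real.log x ≤ M * (2*L) :=
      mul_le_mul_of_nonneg_left (le_of_lt hedge) (by linarith)
    nlinarith
end
end
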